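/- There exist multi-indices α, β ∈ ℕⁿ and a constant C > 0, depending only on n and φ (in particular independent of δ, k and Υ), such that for every integer k ≥ 0 and every Υ ∈ S_{α,β}(ℝⁿ) one has ∫_{ℝⁿ} |η₀^k(x)| dx ≤ C. -/

import Mathlib

open MeasureTheory SchwartzMap Real Filter
open scoped FourierTransform Convolution Topology

noncomputable section

/-- The anisotropic scaling `x ↦ (x₁/δ, …, x_{n−1}/δ, x_n)`. -/
def scaleI (n : ℕ) (δ : ℝ) (x : EuclideanSpace ℝ (Fin n)) : EuclideanSpace ℝ (Fin n) :=
  WithLp.toLp 2 (fun i : Fin n => if (i : ℕ) < n - 1 then x i / δ else x i)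

/-- `g_I(x) = δ^{−(n−1)} g(x₁/δ, …, x_{n−1}/δ, x_n)`. -/
def funI (n : ℕ) (δ : ℝ) (g : EuclideanSpace ℝ (Fin n) → ℂ) :
    EuclideanSpace ℝ (Fin n) → ℂ :=
  fun x => ((δ ^ (n - 1) : ℝ))⁻¹ • g (scaleI n δ x)

/-- Partial derivative in the `i`-th coordinate direction. -/
def pderivI (n : ℕ) (i : Fin n) (f : EuclideanSpace ℝ (Fin n) → ℂ) :
    EuclideanSpace ℝ (Fin n) → ℂ :=
  fun x => fderiv ℝ f x (EuclideanSpace.single i 1)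

/-- Multi-index partial derivative `∂^β`. -/
def mderiv (n : ℕ) (β : Fin n → ℕ) (f : EuclideanSpace ℝ (Fin n) → ℂ) :
    EuclideanSpace ℝ (Fin n) → ℂ :=
  (List.finRange n).foldr (fun i g => (pderivI n i)^[β i] g) f

/-- `Υ ∈ S_{α,β}(ℝⁿ)`. -/
def memS (n : ℕ) (α β : Fin n → ℕ)
    (Υ : SchwartzMap (EuclideanSpace ℝ (Fin n)) ℂ) : Prop :=
  ∀ α' β' : Fin n → ℕ, (∑ i, α' i) ≤ (∑ i, α i) → (∑ i, β' i) ≤ (∑ i, β i) →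
    ∀ x : EuclideanSpace ℝ (Fin n),
      ‖(∏ i, (x i) ^ (α' i)) • mderiv n β' (⇑Υ) x‖ ≤ 1

/-! ### Auxiliary lemmas -/

/-- The scaling as a linear map. -/
def scaleL (n : ℕ) (δ : ℝ) : EuclideanSpace ℝ (Fin n) →ₗ[ℝ] EuclideanSpace ℝ (Fin n) :=
  ((WithLp.linearEquiv 2 ℝ (Fin n → ℝ)).symm.toLinearMap.comp
    ((Matrix.toLin' (Matrix.diagonal fun i : Fin n => if (i:ℕ) < n-1 then δ⁻¹ else 1)).comp
      (WithLp.linearEquiv 2 ℝ (Fin n → ℝ)).toLinearMap))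

lemma scaleL_apply (n : ℕ) (δ : ℝ) (x : EuclideanSpace ℝ (Fin n)) :
    scaleL n δ x = scaleI n δ x := by
  ext i
  simp [scaleL, scaleI, Matrix.toLin'_apply, Matrix.mulVec_diagonal]
  split <;> ring

lemma det_scaleL (n : ℕ) (δ : ℝ) :
    LinearMap.det (scaleL n δ) = (δ⁻¹) ^ (n - 1) := by
  have h : scaleL n δ = ((WithLp.linearEquiv 2 ℝ (Fin n → ℝ)).symm :
      (Fin n → ℝ) ≃ₗ[ℝ] EuclideanSpace ℝ (Fin n)) ∘ₗ
      (Matrix.toLin' (Matrix.diagonal fun i : Fin n => if (i:ℕ) < n-1 then δ⁻¹ else 1)) ∘ₗ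
      (((WithLp.linearEquiv 2 ℝ (Fin n → ℝ)).symm :
      (Fin n → ℝ) ≃ₗ[ℝ] EuclideanSpace ℝ (Fin n)).symm : EuclideanSpace ℝ (Fin n) →ₗ[ℝ] _) := rfl
  rw [h, LinearMap.det_conj, LinearMap.det_toLin', Matrix.det_diagonal]
  cases n with
  | zero => simp
  | succ m =>
    rw [Fin.prod_univ_castSucc]
    simp [Fin.is_lt]

lemma map_scaleI (n : ℕ) {δ : ℝ} (hδ : 0 < δ) :
    Measure.map (scaleI n δ) (volume : Measure (EuclideanSpace ℝ (Fin n))) =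
      ENNReal.ofReal (δ ^ (n-1)) • volume := by
  have hdet : LinearMap.det (scaleL n δ) ≠ 0 := by
    rw [det_scaleL]; positivity
  have := Measure.map_linearMap_addHaar_eq_smul_addHaar
    (volume : Measure (EuclideanSpace ℝ (Fin n))) hdet
  have hco : ⇑(scaleL n δ) = scaleI n δ := funext (scaleL_apply n δ)
  rw [hco, det_scaleL] at this
  rw [this]
  congr 1
  rw [abs_of_nonneg]
  · rw [inv_pow, inv_inv]
  · positivity

lemma integral_norm_funI (n : ℕ) {δ : ℝ} (hδ : 0 < δ) (g : EuclideanSpace ℝ (Fin n) → ℂ)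
    (hg : Continuous g) :
    ∫ x, ‖funI n δ g x‖ = ∫ x, ‖g x‖ := by
  have hmeas : Measurable (scaleI n δ) := by
    rw [← funext (scaleL_apply n δ)]
    exact (LinearMap.continuous_of_finiteDimensional _).measurable
  have h1 : ∫ x, ‖g (scaleI n δ x)‖ = (δ ^ (n-1)) * ∫ x, ‖g x‖ := by
    have h2 : ∫ x, ‖g (scaleI n δ x)‖ = ∫ y, ‖g y‖ ∂(Measure.map (scaleI n δ) volume) := by
      rw [integral_map hmeas.aemeasurable]
      rw [map_scaleI n hδ]
      exact (hg.norm.aestronglyMeasurable).smul_measure _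
    rw [h2, map_scaleI n hδ, integral_smul_measure, ENNReal.toReal_ofReal (by positivity),
      smul_eq_mul]
  calc ∫ x, ‖funI n δ g x‖ = ∫ x, ((δ ^ (n-1):ℝ))⁻¹ * ‖g (scaleI n δ x)‖ := by
        congr 1; funext x
        rw [funI, norm_smul, Real.norm_eq_abs, abs_of_nonneg (by positivity)]
    _ = ((δ ^ (n-1):ℝ))⁻¹ * ∫ x, ‖g (scaleI n δ x)‖ := by rw [integral_const_mul]
    _ = ∫ x, ‖g x‖ := by rw [h1]; field_simp

lemma integrable_funI (n : ℕ) {δ : ℝ} (hδ : 0 < δ) (g : EuclideanSpace ℝ (Fin n) → ℂ)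
    (hg : Continuous g) (hgi : Integrable g) : Integrable (funI n δ g) := by
  have hmeas : Measurable (scaleI n δ) := by
    rw [← funext (scaleL_apply n δ)]
    exact (LinearMap.continuous_of_finiteDimensional _).measurable
  have h2 : Integrable g (Measure.map (scaleI n δ) volume) := by
    rw [map_scaleI n hδ]
    exact hgi.smul_measure ENNReal.ofReal_ne_top
  have hac : Measure.map (scaleI n δ) (volume : Measure (EuclideanSpace ℝ (Fin n))) ≪ volume := by
    rw [map_scaleI n hδ]; exact Measure.smul_absolutelyContinuous
  have h3 : Integrable (g ∘ scaleI n δ) volume := by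
    rw [← integrable_map_measure (hg.aestronglyMeasurable.mono_ac hac) hmeas.aemeasurable]
    exact h2
  exact h3.smul ((δ ^ (n - 1) : ℝ))⁻¹

lemma young_L1 {n : ℕ} (f g : EuclideanSpace ℝ (Fin n) → ℂ)
    (hf : Integrable f) (hg : Integrable g) :
    ∫ x, ‖(f ⋆[ContinuousLinearMap.mul ℝ ℂ, volume] g) x‖ ≤ (∫ x, ‖f x‖) * ∫ x, ‖g x‖ := by
  set nf : EuclideanSpace ℝ (Fin n) → ℝ := fun x => ‖f x‖ with hnf
  set ng : EuclideanSpace ℝ (Fin n) → ℝ := fun x => ‖g x‖ with hng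
  have hnfi : Integrable nf := hf.norm
  have hngi : Integrable ng := hg.norm
  have hconv : Integrable (nf ⋆[ContinuousLinearMap.mul ℝ ℝ, volume] ng) :=
    hnfi.integrable_convolution _ hngi
  have hpt : ∀ x, ‖(f ⋆[ContinuousLinearMap.mul ℝ ℂ, volume] g) x‖ ≤
      (nf ⋆[ContinuousLinearMap.mul ℝ ℝ, volume] ng) x := by
    intro x
    rw [convolution_def, convolution_def]
    refine (norm_integral_le_integral_norm _).trans_eq ?_
    congr 1; funext t
    simp [nf, ng, norm_mul]
  calc ∫ x, ‖(f ⋆[ContinuousLinearMap.mul ℝ ℂ, volume] g) x‖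
      ≤ ∫ x, (nf ⋆[ContinuousLinearMap.mul ℝ ℝ, volume] ng) x :=
        integral_mono_of_nonneg (Eventually.of_forall fun x => norm_nonneg _) hconv
          (Eventually.of_forall hpt)
    _ = (∫ x, nf x) * ∫ x, ng x := by
        rw [integral_convolution _ hnfi hngi]; rfl

/-- The `L¹`-normalized dilation. -/
def dil (n : ℕ) (a : ℝ) (f : EuclideanSpace ℝ (Fin n) → ℂ) :
    EuclideanSpace ℝ (Fin n) → ℂ :=
  fun x => ((a ^ n : ℝ))⁻¹ • f (a⁻¹ • x)

lemma continuous_dil {n : ℕ} {a : ℝ} (f : EuclideanSpace ℝ (Fin n) → ℂ) (hf : Continuous f) :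
    Continuous (dil n a f) :=
  ((hf.comp (continuous_const_smul a⁻¹))).const_smul ((a ^ n : ℝ))⁻¹

lemma integrable_dil {n : ℕ} {a : ℝ} (ha : 0 < a) {f : EuclideanSpace ℝ (Fin n) → ℂ}
    (hf : Integrable f) : Integrable (dil n a f) :=
  (hf.comp_smul (inv_ne_zero ha.ne')).smul ((a ^ n : ℝ))⁻¹

lemma integral_norm_dil {n : ℕ} {a : ℝ} (ha : 0 < a) (f : EuclideanSpace ℝ (Fin n) → ℂ) :
    ∫ x, ‖dil n a f x‖ = ∫ x, ‖f x‖ := by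
  have h := Measure.integral_comp_smul (volume : Measure (EuclideanSpace ℝ (Fin n)))
    (fun x => ‖f x‖) a⁻¹
  rw [finrank_euclideanSpace_fin] at h
  have hpt : ∀ x : EuclideanSpace ℝ (Fin n), ‖dil n a f x‖ = (a^n)⁻¹ * ‖f (a⁻¹ • x)‖ := by
    intro x
    rw [dil, norm_smul, Real.norm_eq_abs, abs_of_nonneg (by positivity)]
  simp_rw [hpt]
  rw [integral_const_mul, h, abs_of_nonneg (by positivity : (0:ℝ) ≤ ((a⁻¹:ℝ) ^ n)⁻¹),
    inv_pow, inv_inv, smul_eq_mul]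
  have hpow : (a:ℝ)^n ≠ 0 := by positivity
  field_simp

lemma fourier_dil {n : ℕ} {a : ℝ} (ha : 0 < a) (f : EuclideanSpace ℝ (Fin n) → ℂ)
    (ξ : EuclideanSpace ℝ (Fin n)) :
    𝓕 (dil n a f) ξ = 𝓕 f (a • ξ) := by
  rw [Real.fourier_eq, Real.fourier_eq]
  have h := Measure.integral_comp_smul (volume : Measure (EuclideanSpace ℝ (Fin n)))
    (fun x => 𝐞 (-(inner ℝ x ξ)) • dil n a f x) a
  rw [finrank_euclideanSpace_fin] at h
  have ha' : ((a:ℝ)^n) ≠ 0 := by positivity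
  have key : ∀ y : EuclideanSpace ℝ (Fin n),
      𝐞 (-(inner ℝ (a • y) ξ)) • dil n a f (a • y)
        = ((a:ℝ)^n)⁻¹ • (𝐞 (-(inner ℝ y (a • ξ))) • f y) := by
    intro y
    rw [dil]
    have h1 : a⁻¹ • a • y = y := by rw [smul_smul, inv_mul_cancel₀ ha.ne', one_smul]
    rw [h1, real_inner_smul_left, ← real_inner_smul_right]
    rw [smul_comm]
  simp_rw [key] at h
  rw [integral_smul] at h
  have habs : |((a:ℝ)^n)⁻¹| = ((a:ℝ)^n)⁻¹ := abs_of_nonneg (by positivity)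
  rw [habs] at h
  have h2 := congrArg (fun z => ((a:ℝ)^n) • z) h
  simp only [smul_smul, mul_inv_cancel₀ ha', one_smul] at h2
  rw [← h2]

lemma fourier_sub {n : ℕ} {f g : EuclideanSpace ℝ (Fin n) → ℂ}
    (hf : Integrable f) (hg : Integrable g)
    (ξ : EuclideanSpace ℝ (Fin n)) : 𝓕 (f - g) ξ = 𝓕 f ξ - 𝓕 g ξ := by
  simp_rw [Real.fourier_eq, Pi.sub_apply, smul_sub]
  exact integral_sub ((Real.fourierIntegral_convergent_iff ξ).2 hf)
    ((Real.fourierIntegral_convergent_iff ξ).2 hg)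

lemma schwartz_fourier_integrable {n : ℕ} (Ψ : SchwartzMap (EuclideanSpace ℝ (Fin n)) ℂ) :
    Integrable (𝓕 ⇑Ψ) := by
  have h : 𝓕 ⇑Ψ = ⇑(SchwartzMap.fourierTransformCLM ℂ Ψ) := by
    rw [SchwartzMap.fourierTransformCLM_apply, SchwartzMap.fourier_coe]
  rw [h]
  exact (SchwartzMap.fourierTransformCLM ℂ Ψ).integrable

lemma eq_of_fourier_eq {n : ℕ} (Ψ : SchwartzMap (EuclideanSpace ℝ (Fin n)) ℂ)
    {g : EuclideanSpace ℝ (Fin n) → ℂ} (hgc : Continuous g) (hgi : Integrable g)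
    (h : ∀ ξ, 𝓕 ⇑Ψ ξ = 𝓕 g ξ) : ⇑Ψ = g := by
  have hF : 𝓕 ⇑Ψ = 𝓕 g := funext h
  have hint : Integrable (𝓕 ⇑Ψ) := schwartz_fourier_integrable Ψ
  have h1 : 𝓕⁻ (𝓕 ⇑Ψ) = ⇑Ψ := Ψ.continuous.fourierInv_fourier_eq Ψ.integrable hint
  have h2 : 𝓕⁻ (𝓕 g) = g := hgc.fourierInv_fourier_eq hgi (hF ▸ hint)
  rw [← h1, hF, h2]

lemma mderiv_zero (n : ℕ) (f : EuclideanSpace ℝ (Fin n) → ℂ) :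
    mderiv n (fun _ => 0) f = f := by
  unfold mderiv
  induction (List.finRange n) with
  | nil => rfl
  | cons a l ih => simpa using ih

lemma weight_integrable (n : ℕ) :
    Integrable (fun x : EuclideanSpace ℝ (Fin n) => ∏ i, (1 + (x i)^2)⁻¹) := by
  have hpi : Integrable (fun y : Fin n → ℝ => ∏ i, (1 + (y i)^2)⁻¹) :=
    Integrable.fintype_prod (f := fun (_ : Fin n) (t : ℝ) => (1 + t^2)⁻¹)
      (fun _ => integrable_inv_one_add_sq)
  have hmp := (EuclideanSpace.volume_preserving_symm_measurableEquiv_toLp (Fin n))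
  have hemb := (MeasurableEquiv.toLp 2 (Fin n → ℝ)).symm.measurableEmbedding
  exact (hmp.integrable_comp_emb hemb).2 hpi

lemma upsilon_bound (n : ℕ) (Υ : SchwartzMap (EuclideanSpace ℝ (Fin n)) ℂ)
    (hS : memS n (fun _ => 2) (fun _ => 0) Υ) (x : EuclideanSpace ℝ (Fin n)) :
    ‖Υ x‖ ≤ 2^n * ∏ i, (1 + (x i)^2)⁻¹ := by
  have hsub : ∀ T : Finset (Fin n), (∏ i ∈ T, (x i)^2) * ‖Υ x‖ ≤ 1 := by
    intro T
    have h := hS (fun i => if i ∈ T then 2 else 0) (fun _ => 0)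
      (Finset.sum_le_sum (fun i _ => by split <;> omega))
      le_rfl x
    rw [mderiv_zero] at h
    have hprod : (∏ i, (x i) ^ (if i ∈ T then 2 else 0)) = ∏ i ∈ T, (x i)^2 := by
      calc (∏ i, (x i) ^ (if i ∈ T then 2 else 0))
          = ∏ i, (if i ∈ T then (x i)^2 else 1) :=
            Finset.prod_congr rfl fun i _ => by split <;> simp
        _ = ∏ i ∈ Finset.univ ∩ T, (x i)^2 := Finset.prod_ite_mem _ _ _
        _ = ∏ i ∈ T, (x i)^2 := by rw [Finset.univ_inter]
    rw [hprod] at h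
    rw [norm_smul, Real.norm_eq_abs, abs_of_nonneg (Finset.prod_nonneg fun i _ => sq_nonneg _)]
      at h
    exact h
  have hexp : (∏ i, (1 + (x i)^2)) * ‖Υ x‖ ≤ 2^n := by
    have h3 : (∏ i, ((x i)^2 + 1)) = ∑ T ∈ Finset.univ.powerset, ∏ i ∈ T, (x i)^2 := by
      rw [Finset.prod_add]
      refine Finset.sum_congr rfl fun T _ => by simp
    have h2 : (∏ i, (1 + (x i)^2)) = ∑ T ∈ Finset.univ.powerset, ∏ i ∈ T, (x i)^2 := by
      rw [← h3]; exact Finset.prod_congr rfl fun i _ => by ring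
    rw [h2, Finset.sum_mul]
    calc (∑ T ∈ Finset.univ.powerset, (∏ i ∈ T, (x i)^2) * ‖Υ x‖)
        ≤ ∑ _T ∈ (Finset.univ (α := Fin n)).powerset, (1:ℝ) :=
          Finset.sum_le_sum fun T _ => hsub T
      _ = 2^n := by simp [Finset.card_powerset]
  have hpos : (0:ℝ) < ∏ i, (1 + (x i)^2) := Finset.prod_pos fun i _ => by positivity
  rw [Finset.prod_inv_distrib, ← div_eq_mul_inv, le_div_iff₀ hpos, mul_comm]
  exact hexp

lemma integral_norm_add_le {n : ℕ} {f g : EuclideanSpace ℝ (Fin n) → ℂ}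
    (hf : Integrable f) (hg : Integrable g) :
    ∫ x, ‖(f + g) x‖ ≤ (∫ x, ‖f x‖) + ∫ x, ‖g x‖ := by
  calc ∫ x, ‖(f + g) x‖ ≤ ∫ x, (‖f x‖ + ‖g x‖) :=
        integral_mono_of_nonneg (Eventually.of_forall fun x => norm_nonneg _)
          (hf.norm.add hg.norm) (Eventually.of_forall fun x => norm_add_le _ _)
    _ = (∫ x, ‖f x‖) + ∫ x, ‖g x‖ := integral_add hf.norm hg.norm

lemma integral_norm_sub_le {n : ℕ} {f g : EuclideanSpace ℝ (Fin n) → ℂ}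
    (hf : Integrable f) (hg : Integrable g) :
    ∫ x, ‖(f - g) x‖ ≤ (∫ x, ‖f x‖) + ∫ x, ‖g x‖ := by
  calc ∫ x, ‖(f - g) x‖ ≤ ∫ x, (‖f x‖ + ‖g x‖) :=
        integral_mono_of_nonneg (Eventually.of_forall fun x => norm_nonneg _)
          (hf.norm.add hg.norm) (Eventually.of_forall fun x => norm_sub_le _ _)
    _ = (∫ x, ‖f x‖) + ∫ x, ‖g x‖ := integral_add hf.norm hg.norm

theorem stmt_4
    (n : ℕ) (hn : 2 ≤ n)
    (φ : SchwartzMap (EuclideanSpace ℝ (Fin n)) ℂ)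
    (hrad : ∀ x y : EuclideanSpace ℝ (Fin n), ‖x‖ = ‖y‖ → φ x = φ y)
    (hφ1 : ∀ ξ : EuclideanSpace ℝ (Fin n), ‖ξ‖ ≤ 1 → 𝓕 ⇑φ ξ = 1)
    (hφ0 : ∀ ξ : EuclideanSpace ℝ (Fin n), 2 ≤ ‖ξ‖ → 𝓕 ⇑φ ξ = 0)
     :
    ∃ (α β : Fin n → ℕ) (C : ℝ), 0 < C ∧
      ∀ ε : ℝ, 0 < ε →
      ∀ δ : ℝ, 0 < δ → δ < 1 → 2 ≤ δ ^ (-ε) →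
      ∀ Ψ : ℕ → SchwartzMap (EuclideanSpace ℝ (Fin n)) ℂ,
        (∀ ξ, 𝓕 ⇑(Ψ 0) ξ = 𝓕 ⇑φ ξ) →
        (∀ k : ℕ, 1 ≤ k → ∀ ξ, 𝓕 ⇑(Ψ k) ξ =
          𝓕 ⇑φ ((δ ^ ((k : ℝ) * ε)) • ξ) - 𝓕 ⇑φ ((δ ^ (((k : ℝ) - 1) * ε)) • ξ)) →
      ∀ Φ : ℕ → SchwartzMap (EuclideanSpace ℝ (Fin n)) ℂ,
        (∀ ξ, 𝓕 ⇑(Φ 0) ξ = 𝓕 ⇑φ ξ) →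
        (∀ k : ℕ, 1 ≤ k → ∀ ξ, 𝓕 ⇑(Φ k) ξ =
          𝓕 ⇑φ (((2 : ℝ) ^ (-(k : ℝ))) • ξ) - 𝓕 ⇑φ (((2 : ℝ) ^ (1 - (k : ℝ))) • ξ)) →
      ∀ k : ℕ,
      ∀ Υ : SchwartzMap (EuclideanSpace ℝ (Fin n)) ℂ, memS n α β Υ →
        (∫ x : EuclideanSpace ℝ (Fin n), ‖((funI n δ (⇑(Ψ 0) + ⇑(Ψ 1)) ⋆[ContinuousLinearMap.mul ℝ ℂ, volume] funI n δ ⇑(Φ k)) ⋆[ContinuousLinearMap.mul ℝ ℂ, volume] funI n δ ⇑Υ) x‖) ≤ C := by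
  classical
  set Iφ : ℝ := ∫ x, ‖φ x‖ with hIφ
  have hIφ0 : 0 ≤ Iφ := integral_nonneg fun x => norm_nonneg _
  set CI : ℝ := ∫ x : EuclideanSpace ℝ (Fin n), ∏ i, (1 + (x i)^2)⁻¹ with hCI
  have hCI0 : 0 ≤ CI := integral_nonneg fun x => Finset.prod_nonneg fun i _ => by positivity
  refine ⟨fun _ => 2, fun _ => 0, (3*Iφ+1) * ((2*Iφ+1) * ((2:ℝ)^n * CI + 1)), by positivity,
    ?_⟩
  intro ε hε δ hδ0 hδ1 hδ2 Ψ hΨ0 hΨk Φ hΦ0 hΦk k Υ hΥ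
  -- identify Ψ 0 with φ
  have hPsi0 : ⇑(Ψ 0) = ⇑φ := eq_of_fourier_eq (Ψ 0) φ.continuous φ.integrable hΨ0
  -- identify Ψ 1 with dil (δ^ε) φ - φ
  set a : ℝ := δ ^ (ε : ℝ) with ha_def
  have ha : 0 < a := Real.rpow_pos_of_pos hδ0 _
  have hPsi1 : ⇑(Ψ 1) = dil n a ⇑φ - ⇑φ := by
    refine eq_of_fourier_eq (Ψ 1)
      ((continuous_dil _ φ.continuous).sub φ.continuous)
      ((integrable_dil ha φ.integrable).sub φ.integrable) ?_
    intro ξ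
    have h1 := hΨk 1 le_rfl ξ
    have e1 : ((1:ℕ):ℝ) * ε = ε := by norm_num
    have e2 : (((1:ℕ):ℝ) - 1) * ε = 0 := by norm_num
    rw [e1, e2, Real.rpow_zero, one_smul] at h1
    rw [h1, fourier_sub (integrable_dil ha φ.integrable) φ.integrable, fourier_dil ha]
  -- bound for Φ k
  have hPhiBound : ∫ x, ‖(Φ k) x‖ ≤ 2 * Iφ := by
    rcases Nat.eq_zero_or_pos k with hk | hk
    · subst hk
      have hPhi0 : ⇑(Φ 0) = ⇑φ := eq_of_fourier_eq (Φ 0) φ.continuous φ.integrable hΦ0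
      rw [hPhi0]
      linarith
    · set b1 : ℝ := (2:ℝ) ^ (-(k:ℝ)) with hb1
      set b2 : ℝ := (2:ℝ) ^ (1 - (k:ℝ)) with hb2
      have hb1p : 0 < b1 := Real.rpow_pos_of_pos two_pos _
      have hb2p : 0 < b2 := Real.rpow_pos_of_pos two_pos _
      have hPhik : ⇑(Φ k) = dil n b1 ⇑φ - dil n b2 ⇑φ := by
        refine eq_of_fourier_eq (Φ k)
          ((continuous_dil _ φ.continuous).sub (continuous_dil _ φ.continuous))
          ((integrable_dil hb1p φ.integrable).sub (integrable_dil hb2p φ.integrable)) ?_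
        intro ξ
        rw [hΦk k hk ξ, fourier_sub (integrable_dil hb1p φ.integrable)
          (integrable_dil hb2p φ.integrable), fourier_dil hb1p, fourier_dil hb2p]
      rw [hPhik]
      calc ∫ x, ‖(dil n b1 ⇑φ - dil n b2 ⇑φ) x‖
          ≤ (∫ x, ‖dil n b1 (⇑φ) x‖) + ∫ x, ‖dil n b2 (⇑φ) x‖ :=
            integral_norm_sub_le (integrable_dil hb1p φ.integrable)
              (integrable_dil hb2p φ.integrable)
        _ = 2 * Iφ := by rw [integral_norm_dil hb1p, integral_norm_dil hb2p]; ring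
  -- bound for Ψ 0 + Ψ 1
  have hPsiBound : ∫ x, ‖(⇑(Ψ 0) + ⇑(Ψ 1)) x‖ ≤ 3 * Iφ := by
    calc ∫ x, ‖(⇑(Ψ 0) + ⇑(Ψ 1)) x‖
        ≤ (∫ x, ‖(Ψ 0) x‖) + ∫ x, ‖(Ψ 1) x‖ :=
          integral_norm_add_le (Ψ 0).integrable (Ψ 1).integrable
      _ ≤ Iφ + 2 * Iφ := by
          have e0 : ∫ x, ‖(Ψ 0) x‖ = Iφ := by rw [hPsi0]
          have e1 : ∫ x, ‖(Ψ 1) x‖ ≤ 2 * Iφ := by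
            rw [hPsi1]
            calc ∫ x, ‖(dil n a ⇑φ - ⇑φ) x‖
                ≤ (∫ x, ‖dil n a (⇑φ) x‖) + ∫ x, ‖φ x‖ :=
                  integral_norm_sub_le (integrable_dil ha φ.integrable) φ.integrable
              _ = 2 * Iφ := by rw [integral_norm_dil ha]; ring
          linarith
      _ = 3 * Iφ := by ring
  -- bound for Υ
  have hUpsBound : ∫ x, ‖Υ x‖ ≤ (2:ℝ)^n * CI := by
    calc ∫ x, ‖Υ x‖ ≤ ∫ x : EuclideanSpace ℝ (Fin n), (2:ℝ)^n * ∏ i, (1 + (x i)^2)⁻¹ :=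
          integral_mono_of_nonneg (Eventually.of_forall fun x => norm_nonneg _)
            ((weight_integrable n).const_mul _)
            (Eventually.of_forall (upsilon_bound n Υ hΥ))
      _ = (2:ℝ)^n * CI := by rw [integral_const_mul]
  -- the three factors
  set F := funI n δ (⇑(Ψ 0) + ⇑(Ψ 1)) with hF
  set G := funI n δ ⇑(Φ k) with hG
  set H := funI n δ ⇑Υ with hH
  have hFc : Continuous (⇑(Ψ 0) + ⇑(Ψ 1)) := (Ψ 0).continuous.add (Ψ 1).continuous
  have hFi : Integrable F := integrable_funI n hδ0 _ hFc ((Ψ 0).integrable.add (Ψ 1).integrable)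
  have hGi : Integrable G := integrable_funI n hδ0 _ (Φ k).continuous (Φ k).integrable
  have hHi : Integrable H := integrable_funI n hδ0 _ Υ.continuous Υ.integrable
  have hFn : ∫ x, ‖F x‖ ≤ 3 * Iφ := by
    rw [hF, integral_norm_funI n hδ0 _ hFc]; exact hPsiBound
  have hGn : ∫ x, ‖G x‖ ≤ 2 * Iφ := by
    rw [hG, integral_norm_funI n hδ0 _ (Φ k).continuous]; exact hPhiBound
  have hHn : ∫ x, ‖H x‖ ≤ (2:ℝ)^n * CI := by
    rw [hH, integral_norm_funI n hδ0 _ Υ.continuous]; exact hUpsBound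
  have hFn0 : 0 ≤ ∫ x, ‖F x‖ := integral_nonneg fun x => norm_nonneg _
  have hGn0 : 0 ≤ ∫ x, ‖G x‖ := integral_nonneg fun x => norm_nonneg _
  have hHn0 : 0 ≤ ∫ x, ‖H x‖ := integral_nonneg fun x => norm_nonneg _
  have hFGi : Integrable (F ⋆[ContinuousLinearMap.mul ℝ ℂ, volume] G) :=
    hFi.integrable_convolution _ hGi
  have h1 := young_L1 (F ⋆[ContinuousLinearMap.mul ℝ ℂ, volume] G) H hFGi hHi
  have h2 := young_L1 F G hFi hGi
  calc (∫ x : EuclideanSpace ℝ (Fin n),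
        ‖((F ⋆[ContinuousLinearMap.mul ℝ ℂ, volume] G) ⋆[ContinuousLinearMap.mul ℝ ℂ, volume] H) x‖)
      ≤ (∫ x, ‖(F ⋆[ContinuousLinearMap.mul ℝ ℂ, volume] G) x‖) * ∫ x, ‖H x‖ := h1
    _ ≤ ((∫ x, ‖F x‖) * ∫ x, ‖G x‖) * ∫ x, ‖H x‖ :=
        mul_le_mul_of_nonneg_right h2 hHn0
    _ ≤ (3*Iφ+1) * ((2*Iφ+1) * ((2:ℝ)^n * CI + 1)) := by
        have f1 : ∫ x, ‖F x‖ ≤ 3*Iφ+1 := by linarith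
        have f2 : ∫ x, ‖G x‖ ≤ 2*Iφ+1 := by linarith
        have f3 : ∫ x, ‖H x‖ ≤ (2:ℝ)^n * CI + 1 := by linarith
        rw [mul_assoc]
        gcongr
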